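/- The invariant ring ℚ[x₁,x₂,x₃,y]^{S₃}, where S₃ permutes x₁,x₂,x₃ and acts on y by the sign character, is generated as a ℚ-algebra by e₁ = x₁+x₂+x₃, e₂ = x₁x₂+x₂x₃+x₁x₃, e₃ = x₁x₂x₃, y², and a = y(x₂−x₁)(x₃−x₂)(x₃−x₁). -/

import Mathlib

open MvPolynomial

/-- The action of `σ ∈ S₃` on `ℚ[x₁,x₂,x₃,y]`: `σ · x_i = x_{σ i}` and `σ · y = sign(σ) y`. -/
noncomputable def s3polyAct (σ : Equiv.Perm (Fin 3)) :
    MvPolynomial ((Fin 3) ⊕ Unit) ℚ →ₐ[ℚ] MvPolynomial ((Fin 3) ⊕ Unit) ℚ :=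
  aeval (Sum.elim (fun i => X (Sum.inl (σ i)))
    (fun _ => C ((Equiv.Perm.sign σ : ℤ) : ℚ) * X (Sum.inr ())))

noncomputable def e₁ : MvPolynomial ((Fin 3) ⊕ Unit) ℚ := ∑ i : Fin 3, X (Sum.inl i)

noncomputable def e₂ : MvPolynomial ((Fin 3) ⊕ Unit) ℚ :=
  X (Sum.inl 0) * X (Sum.inl 1) + X (Sum.inl 1) * X (Sum.inl 2) + X (Sum.inl 0) * X (Sum.inl 2)

noncomputable def e₃ : MvPolynomial ((Fin 3) ⊕ Unit) ℚ :=
  X (Sum.inl 0) * X (Sum.inl 1) * X (Sum.inl 2)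

noncomputable def ysq : MvPolynomial ((Fin 3) ⊕ Unit) ℚ := X (Sum.inr ()) ^ 2

noncomputable def aInv : MvPolynomial ((Fin 3) ⊕ Unit) ℚ :=
  X (Sum.inr ()) * (X (Sum.inl 1) - X (Sum.inl 0)) * (X (Sum.inl 2) - X (Sum.inl 1)) *
    (X (Sum.inl 2) - X (Sum.inl 0))

namespace S3Aux

noncomputable section

abbrev A3 : Type := MvPolynomial (Fin 3) ℚ
abbrev R3 : Type := MvPolynomial ((Fin 3) ⊕ Unit) ℚ

def ι : A3 →ₐ[ℚ] R3 := rename Sum.inl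

def Y : R3 := X (Sum.inr ())

def sgn (σ : Equiv.Perm (Fin 3)) : ℚ := ((Equiv.Perm.sign σ : ℤ) : ℚ)

lemma sgn_mul_self (σ : Equiv.Perm (Fin 3)) : sgn σ * sgn σ = 1 := by
  unfold sgn
  rcases Int.units_eq_one_or (Equiv.Perm.sign σ) with h | h <;> rw [h] <;> norm_num

lemma sgn_ne_zero (σ : Equiv.Perm (Fin 3)) : sgn σ ≠ 0 := by
  unfold sgn
  rcases Int.units_eq_one_or (Equiv.Perm.sign σ) with h | h <;> rw [h] <;> norm_num

lemma act_X (σ : Equiv.Perm (Fin 3)) (i : Fin 3) :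
    s3polyAct σ (X (Sum.inl i)) = X (Sum.inl (σ i)) := by
  simp [s3polyAct]

lemma act_Y (σ : Equiv.Perm (Fin 3)) : s3polyAct σ Y = C (sgn σ) * Y := by
  simp [s3polyAct, Y, sgn]

lemma act_iota (σ : Equiv.Perm (Fin 3)) (a : A3) :
    s3polyAct σ (ι a) = ι (rename (⇑σ) a) := by
  have : (s3polyAct σ).comp ι = ι.comp (rename (⇑σ)) := by
    apply algHom_ext
    intro i
    simp [ι, act_X]
  exact congrFun (congrArg (DFunLike.coe) this) a

lemma act_act (σ τ : Equiv.Perm (Fin 3)) (f : R3) :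
    s3polyAct σ (s3polyAct τ f) = s3polyAct (σ * τ) f := by
  have : (s3polyAct σ).comp (s3polyAct τ) = s3polyAct (σ * τ) := by
    apply algHom_ext
    rintro (i | u)
    · simp [act_X]
    · simp only [AlgHom.coe_comp, Function.comp_apply, s3polyAct, aeval_X, Sum.elim_inr,
        map_mul, Equiv.Perm.sign_mul, aeval_C, algebraMap_eq]
      push_cast
      rw [map_mul]
      ring
  exact congrFun (congrArg (DFunLike.coe) this) f

lemma act_one (f : R3) : s3polyAct 1 f = f := by
  have : s3polyAct 1 = AlgHom.id ℚ R3 := by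
    apply algHom_ext
    rintro (i | u) <;> simp [s3polyAct]
  rw [this]; rfl


def F : R3 →ₐ[ℚ] Polynomial A3 :=
  aeval (Sum.elim (fun i => Polynomial.C (X i)) (fun _ => Polynomial.X))

def G : Polynomial A3 →+* R3 :=
  Polynomial.eval₂RingHom (ι.toRingHom : A3 →+* R3) Y

lemma G_C (a : A3) : G (Polynomial.C a) = ι a := Polynomial.eval₂_C _ _

lemma G_X : G Polynomial.X = Y := Polynomial.eval₂_X _ _

lemma F_X (i : Fin 3) : F (X (Sum.inl i)) = Polynomial.C (X i) := by simp [F]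

lemma F_Y : F Y = Polynomial.X := by simp [F, Y]

lemma F_iota (a : A3) : F (ι a) = Polynomial.C a := by
  have : F.comp ι = Polynomial.CAlgHom := by
    apply algHom_ext
    intro i
    simp [ι, F, Polynomial.CAlgHom]
  exact congrFun (congrArg (DFunLike.coe) this) a

lemma GF (f : R3) : G (F f) = f := by
  have : G.comp (F.toRingHom) = RingHom.id R3 := by
    apply ringHom_ext
    · intro r
      simp [F, G, algebraMap_eq, ι]
    · rintro (i | u)
      · simp [F_X, G_C, ι]
      · have : (X (Sum.inr u) : R3) = Y := by cases u; rfl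
        rw [this]
        simp [F_Y, G_X]
  exact congrFun (congrArg (DFunLike.coe) this) f

lemma coeff_F_act (σ : Equiv.Perm (Fin 3)) (f : R3) (k : ℕ) :
    (F (s3polyAct σ f)).coeff k = C (sgn σ ^ k) * rename (⇑σ) ((F f).coeff k) := by
  conv_lhs => rw [← GF f]
  generalize F f = q
  induction q using Polynomial.induction_on' with
  | add p r hp hr =>
    simp only [map_add, Polynomial.coeff_add, hp, hr]
    ring
  | monomial n a =>
    rw [← Polynomial.C_mul_X_pow_eq_monomial]
    rw [map_mul, map_pow, G_C, G_X, map_mul, map_pow, act_iota, act_Y,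
      map_mul, map_pow, F_iota, map_mul, F_Y, mul_pow]
    have hFC : F (C (sgn σ)) = Polynomial.C (C (sgn σ)) := by
      rw [show (C (sgn σ) : R3) = ι (C (sgn σ)) by simp [ι], F_iota]
    rw [hFC, ← Polynomial.C_pow, ← mul_assoc, ← map_mul,
      Polynomial.coeff_C_mul, Polynomial.coeff_C_mul, Polynomial.coeff_X_pow]
    split_ifs with h
    · subst h
      simp only [mul_one]
      rw [← map_pow]
      ring
    · simp


lemma dvd_of_eval_eq_zero {n : ℕ} (j : Fin (n + 1)) (hj : j ≠ 0)
    (c : MvPolynomial (Fin (n + 1)) ℚ)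
    (hc : aeval (Function.update (X : Fin (n+1) → MvPolynomial (Fin (n+1)) ℚ) 0 (X j)) c = 0) :
    (X 0 - X j : MvPolynomial (Fin (n + 1)) ℚ) ∣ c := by
  obtain ⟨j', rfl⟩ := Fin.exists_succ_eq_of_ne_zero hj
  have hΦ : finSuccEquiv ℚ n (X 0 - X j'.succ) = Polynomial.X - Polynomial.C (X j') := by
    rw [map_sub, finSuccEquiv_X_zero, finSuccEquiv_X_succ]
  have hroot : Polynomial.eval (X j') (finSuccEquiv ℚ n c) = 0 := by
    set Φ : MvPolynomial (Fin (n+1)) ℚ →+* Polynomial (MvPolynomial (Fin n) ℚ) :=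
      (finSuccEquiv ℚ n).toAlgHom.toRingHom with hΦdef
    set Ev : Polynomial (MvPolynomial (Fin n) ℚ) →+* MvPolynomial (Fin n) ℚ :=
      Polynomial.evalRingHom (X j') with hEvdef
    set U : MvPolynomial (Fin (n+1)) ℚ →+* MvPolynomial (Fin (n+1)) ℚ :=
      (aeval (Function.update (X : Fin (n+1) → MvPolynomial (Fin (n+1)) ℚ) 0
        (X j'.succ))).toRingHom with hUdef
    have hcomp : Ev.comp Φ = (Ev.comp Φ).comp U := by
      apply ringHom_ext
      · intro r
        simp [hΦdef, hEvdef, hUdef]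
      · intro i
        rcases Fin.eq_zero_or_eq_succ i with rfl | ⟨m, rfl⟩
        · simp [hΦdef, hEvdef, hUdef, finSuccEquiv_X_zero, finSuccEquiv_X_succ]
        · simp [hΦdef, hEvdef, hUdef, Function.update_apply, Fin.succ_ne_zero,
            finSuccEquiv_X_succ]
    have hc' : U c = 0 := hc
    have := congrFun (congrArg (DFunLike.coe) hcomp) c
    simp only [RingHom.coe_comp, Function.comp_apply] at this
    rw [hc', map_zero] at this
    simpa [hΦdef, hEvdef] using this
  have hdvd : finSuccEquiv ℚ n (X 0 - X j'.succ) ∣ finSuccEquiv ℚ n c := by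
    rw [hΦ]
    exact Polynomial.dvd_iff_isRoot.mpr hroot
  obtain ⟨d, hd⟩ := hdvd
  refine ⟨(finSuccEquiv ℚ n).symm d, ?_⟩
  apply (finSuccEquiv ℚ n).injective
  rw [map_mul, hd, AlgEquiv.apply_symm_apply]

/-- substitute `X i := X j` -/
def ev (i j : Fin 3) : A3 →ₐ[ℚ] A3 := aeval (fun k => if k = i then X j else X k)

lemma sub_dvd_of_ev_eq_zero (i j : Fin 3) (hij : i ≠ j) (c : A3) (hc : ev i j c = 0) :
    (X i - X j : A3) ∣ c := by
  set π : Equiv.Perm (Fin 3) := Equiv.swap 0 i with hπ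
  have hππ : ∀ k, π (π k) = k := fun k => Equiv.swap_apply_self _ _ _
  have hπj : π j ≠ 0 := by
    intro h
    have : j = π 0 := by rw [← hππ j, h]
    simp [hπ, Equiv.swap_apply_left] at this
    exact hij this.symm
  have hkey : aeval (Function.update (X : Fin 3 → A3) 0 (X (π j))) (rename (⇑π) c) = 0 := by
    have hcomp : ((aeval (Function.update (X : Fin 3 → A3) 0 (X (π j))) : A3 →ₐ[ℚ] A3).comp
          (rename (⇑π) : A3 →ₐ[ℚ] A3)) =
        ((rename (⇑π) : A3 →ₐ[ℚ] A3).comp (ev i j)) := by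
      apply algHom_ext
      intro k
      by_cases hk : k = i
      · subst hk
        simp [ev, Equiv.swap_apply_right, Function.update_self, hπ]
      · have : π k ≠ 0 := by
          intro h
          have : k = π 0 := by rw [← hππ k, h]
          simp [hπ, Equiv.swap_apply_left] at this
          exact hk this
        simp [ev, hk, Function.update_apply, this]
    have := congrFun (congrArg (DFunLike.coe) hcomp) c
    simp only [AlgHom.coe_comp, Function.comp_apply] at this
    rw [this, hc, map_zero]
  have hdvd := dvd_of_eval_eq_zero (π j) hπj _ hkey
  have := map_dvd (rename (⇑π) : A3 →ₐ[ℚ] A3) hdvd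
  rw [map_sub, rename_X, rename_X, hππ] at this
  have hπ0 : π 0 = i := Equiv.swap_apply_left 0 i
  rw [hπ0] at this
  have hrr : rename (⇑π) (rename (⇑π) c) = c := by
    rw [rename_rename]
    have : (⇑π ∘ ⇑π) = id := funext hππ
    rw [this, rename_id, AlgHom.id_apply]
  rwa [hrr] at this


def delta : A3 := (X 1 - X 0) * (X 2 - X 1) * (X 2 - X 0)

lemma rename_swap_delta (x y : Fin 3) (h : x ≠ y) :
    rename (⇑(Equiv.swap x y)) delta = -delta := by
  have hs : ∀ a b : Fin 3, rename (⇑(Equiv.swap x y)) (X a - X b : A3) =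
      X (Equiv.swap x y a) - X (Equiv.swap x y b) := by
    intro a b; rw [map_sub, rename_X, rename_X]
  fin_cases x <;> fin_cases y <;> first
    | exact absurd rfl h
    | (simp only [delta, map_mul, hs, Equiv.swap_apply_def]
       norm_num [Fin.ext_iff, show ((⟨2, by norm_num⟩ : Fin 3)) = 2 from rfl,
         show ((⟨1, by norm_num⟩ : Fin 3)) = 1 from rfl, show ((⟨0, by norm_num⟩ : Fin 3)) = 0 from rfl]
       ring)

lemma rename_delta (σ : Equiv.Perm (Fin 3)) :
    rename (⇑σ) delta = C (sgn σ) * delta := by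
  refine Equiv.Perm.swap_induction_on σ ?_ ?_
  · simp [sgn]
  · intro τ x y hxy ih
    have : (⇑(Equiv.swap x y * τ)) = (⇑(Equiv.swap x y)) ∘ (⇑τ) := rfl
    rw [this, ← rename_rename, ih, map_mul, rename_swap_delta x y hxy, rename_C]
    have : sgn (Equiv.swap x y * τ) = -sgn τ := by
      unfold sgn
      rw [Equiv.Perm.sign_mul, Equiv.Perm.sign_swap hxy]
      push_cast
      ring
    rw [this, map_neg]
    ring

lemma X_sub_ne (a b : Fin 3) (h : a ≠ b) : (X a - X b : A3) ≠ 0 := by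
  refine sub_ne_zero.mpr ?_
  intro hXX
  exact h (X_injective hXX)

lemma delta_ne_zero : (delta : A3) ≠ 0 := by
  apply mul_ne_zero (mul_ne_zero _ _) <;> exact X_sub_ne _ _ (by decide)

lemma ev_eq_zero_of_anti (i j : Fin 3) (hij : i ≠ j) (c : A3)
    (hc : rename (⇑(Equiv.swap i j)) c = -c) : ev i j c = 0 := by
  have hcomp : (ev i j).comp (rename (⇑(Equiv.swap i j)) : A3 →ₐ[ℚ] A3) = ev i j := by
    apply algHom_ext
    intro k
    by_cases hk : k = i
    · subst hk
      simp [ev, Equiv.swap_apply_left, hij]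
    · by_cases hk' : k = j
      · subst hk'
        simp [ev, Equiv.swap_apply_right, hij.symm, hk]
      · simp [ev, Equiv.swap_apply_of_ne_of_ne hk hk', hk]
  have h2 := congrFun (congrArg (DFunLike.coe) hcomp) c
  simp only [AlgHom.coe_comp, Function.comp_apply] at h2
  rw [hc, map_neg] at h2
  have h3 : (2 : A3) * ev i j c = 0 := by
    rw [two_mul]
    nth_rewrite 1 [← h2]
    exact neg_add_cancel _
  rcases mul_eq_zero.mp h3 with h | h
  · exact absurd h two_ne_zero
  · exact h


lemma anti_factor (c : A3) (hc : ∀ σ : Equiv.Perm (Fin 3), rename (⇑σ) c = C (sgn σ) * c) :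
    ∃ s : A3, c = delta * s ∧ s.IsSymmetric := by
  have hswap : ∀ i j : Fin 3, i ≠ j → rename (⇑(Equiv.swap i j)) c = -c := by
    intro i j h
    rw [hc (Equiv.swap i j)]
    unfold sgn
    rw [Equiv.Perm.sign_swap h]
    push_cast
    rw [map_neg, map_one]
    ring
  have h10 := ev_eq_zero_of_anti 1 0 (by decide) c (hswap _ _ (by decide))
  have h21 := ev_eq_zero_of_anti 2 1 (by decide) c (hswap _ _ (by decide))
  have h20 := ev_eq_zero_of_anti 2 0 (by decide) c (hswap _ _ (by decide))
  obtain ⟨c1, hc1⟩ := sub_dvd_of_ev_eq_zero 1 0 (by decide) c h10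
  have e21 : ev 2 1 (X 1 - X 0 : A3) = X 1 - X 0 := by simp [ev]
  have h21' : ev 2 1 c1 = 0 := by
    rw [hc1, map_mul, e21] at h21
    exact (mul_eq_zero.mp h21).resolve_left (X_sub_ne 1 0 (by decide))
  obtain ⟨c2, hc2⟩ := sub_dvd_of_ev_eq_zero 2 1 (by decide) c1 h21'
  have e20p : ev 2 0 (X 1 - X 0 : A3) = X 1 - X 0 := by simp [ev]
  have e20q : ev 2 0 (X 2 - X 1 : A3) = X 0 - X 1 := by simp [ev]
  have h20' : ev 2 0 c2 = 0 := by
    rw [hc1, hc2, map_mul, map_mul, e20p, e20q] at h20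
    have := (mul_eq_zero.mp h20).resolve_left (X_sub_ne 1 0 (by decide))
    exact (mul_eq_zero.mp this).resolve_left (X_sub_ne 0 1 (by decide))
  obtain ⟨s, hs⟩ := sub_dvd_of_ev_eq_zero 2 0 (by decide) c2 h20'
  have hfac : c = delta * s := by rw [hc1, hc2, hs, delta]; ring
  refine ⟨s, hfac, ?_⟩
  intro σ
  have h1 := hc σ
  rw [hfac, map_mul, rename_delta, mul_assoc, ← mul_assoc (C (sgn σ))] at h1
  have hne : (C (sgn σ) * delta : A3) ≠ 0 := by
    apply mul_ne_zero _ delta_ne_zero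
    simpa using sgn_ne_zero σ
  have h2 : (C (sgn σ) * delta) * rename (⇑σ) s = (C (sgn σ) * delta) * s := by
    rw [h1]; ring
  exact mul_left_cancel₀ hne h2


lemma esymm1 : esymm (Fin 3) ℚ 1 = X 0 + X 1 + X 2 := by
  rw [esymm, show (Finset.powersetCard 1 (Finset.univ : Finset (Fin 3)))
      = {{0}, {1}, {2}} from by decide]
  rw [Finset.sum_insert (by decide), Finset.sum_insert (by decide), Finset.sum_singleton]
  simp [Finset.prod_singleton, add_assoc]

lemma esymm2 : esymm (Fin 3) ℚ 2 = X 0 * X 1 + X 1 * X 2 + X 0 * X 2 := by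
  rw [esymm, show (Finset.powersetCard 2 (Finset.univ : Finset (Fin 3)))
      = {{0, 1}, {0, 2}, {1, 2}} from by decide]
  rw [Finset.sum_insert (by decide), Finset.sum_insert (by decide), Finset.sum_singleton,
    Finset.prod_pair (by decide), Finset.prod_pair (by decide), Finset.prod_pair (by decide)]
  ring

lemma esymm3 : esymm (Fin 3) ℚ 3 = X 0 * X 1 * X 2 := by
  rw [esymm, show (Finset.powersetCard 3 (Finset.univ : Finset (Fin 3)))
      = {{0, 1, 2}} from by decide]
  rw [Finset.sum_singleton, Finset.prod_insert (by decide), Finset.prod_pair (by decide)]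
  ring

def T : Subalgebra ℚ R3 := Algebra.adjoin ℚ ({e₁, e₂, e₃, ysq, aInv} : Set R3)

lemma iota_esymm_mem (i : Fin 3) : ι (esymm (Fin 3) ℚ ((i : ℕ) + 1)) ∈ T := by
  have h1 : e₁ ∈ T := Algebra.subset_adjoin (by simp)
  have h2 : e₂ ∈ T := Algebra.subset_adjoin (by simp)
  have h3 : e₃ ∈ T := Algebra.subset_adjoin (by simp)
  fin_cases i
  · show ι (esymm (Fin 3) ℚ 1) ∈ T
    rw [esymm1]
    have : ι (X 0 + X 1 + X 2 : A3) = e₁ := by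
      simp [ι, e₁, Fin.sum_univ_three]
    rwa [this]
  · show ι (esymm (Fin 3) ℚ 2) ∈ T
    rw [esymm2]
    have : ι (X 0 * X 1 + X 1 * X 2 + X 0 * X 2 : A3) = e₂ := by
      simp [ι, e₂]
    rwa [this]
  · show ι (esymm (Fin 3) ℚ 3) ∈ T
    rw [esymm3]
    have : ι (X 0 * X 1 * X 2 : A3) = e₃ := by
      simp [ι, e₃]
    rwa [this]

lemma sym_mem (c : A3) (hc : c.IsSymmetric) : ι c ∈ T := by
  obtain ⟨q, hq⟩ := esymmAlgHom_fin_surjective (R := ℚ) (n := 3) (le_refl 3)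
    ⟨c, (mem_symmetricSubalgebra c).mpr hc⟩
  have hq' : aeval (fun i : Fin 3 => esymm (Fin 3) ℚ ((i : ℕ) + 1)) q = c := by
    have := congrArg Subtype.val hq
    rwa [esymmAlgHom_apply] at this
  rw [← hq']
  have hcomp : ι (aeval (fun i : Fin 3 => esymm (Fin 3) ℚ ((i : ℕ) + 1)) q)
      = aeval (fun i : Fin 3 => ι (esymm (Fin 3) ℚ ((i : ℕ) + 1))) q := by
    rw [← comp_aeval]
    rfl
  rw [hcomp]
  have : aeval (fun i : Fin 3 => ι (esymm (Fin 3) ℚ ((i : ℕ) + 1))) q ∈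
      Algebra.adjoin ℚ (Set.range fun i : Fin 3 => ι (esymm (Fin 3) ℚ ((i : ℕ) + 1))) := by
    rw [Algebra.adjoin_range_eq_range_aeval]
    exact ⟨q, rfl⟩
  refine Algebra.adjoin_le ?_ this
  rintro x ⟨i, rfl⟩
  exact iota_esymm_mem i


lemma inv_of_swaps (g : R3)
    (h : ∀ x y : Fin 3, x ≠ y → s3polyAct (Equiv.swap x y) g = g) :
    ∀ σ : Equiv.Perm (Fin 3), s3polyAct σ g = g := by
  intro σ
  refine Equiv.Perm.swap_induction_on σ (act_one g) ?_
  intro τ x y hxy ih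
  rw [← act_act, ih, h x y hxy]

lemma act_e₁ (σ : Equiv.Perm (Fin 3)) : s3polyAct σ e₁ = e₁ := by
  rw [e₁, map_sum]
  simp only [act_X]
  exact Equiv.sum_comp σ (fun i => (X (Sum.inl i) : R3))

lemma act_swap_e₂ (x y : Fin 3) (h : x ≠ y) : s3polyAct (Equiv.swap x y) e₂ = e₂ := by
  simp only [e₂, map_add, map_mul, act_X]
  fin_cases x <;> fin_cases y <;> first
    | exact absurd rfl h
    | (simp only [Equiv.swap_apply_def]
       norm_num [Fin.ext_iff, show ((⟨2, by norm_num⟩ : Fin 3)) = 2 from rfl,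
         show ((⟨1, by norm_num⟩ : Fin 3)) = 1 from rfl, show ((⟨0, by norm_num⟩ : Fin 3)) = 0 from rfl]
       ring)

lemma act_swap_e₃ (x y : Fin 3) (h : x ≠ y) : s3polyAct (Equiv.swap x y) e₃ = e₃ := by
  simp only [e₃, map_mul, act_X]
  fin_cases x <;> fin_cases y <;> first
    | exact absurd rfl h
    | (simp only [Equiv.swap_apply_def]
       norm_num [Fin.ext_iff, show ((⟨2, by norm_num⟩ : Fin 3)) = 2 from rfl,
         show ((⟨1, by norm_num⟩ : Fin 3)) = 1 from rfl, show ((⟨0, by norm_num⟩ : Fin 3)) = 0 from rfl]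
       ring)

lemma act_ysq (σ : Equiv.Perm (Fin 3)) : s3polyAct σ ysq = ysq := by
  have : (ysq : R3) = Y ^ 2 := rfl
  rw [this, map_pow, act_Y, mul_pow, ← map_pow, pow_two, sgn_mul_self, map_one, one_mul]

lemma act_swap_aInv (x y : Fin 3) (h : x ≠ y) : s3polyAct (Equiv.swap x y) aInv = aInv := by
  have hY : s3polyAct (Equiv.swap x y) (X (Sum.inr ()) : R3) = - X (Sum.inr ()) := by
    have : s3polyAct (Equiv.swap x y) (X (Sum.inr ()) : R3) = C (sgn (Equiv.swap x y)) * Y :=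
      act_Y _
    rw [this, Y]
    have : sgn (Equiv.swap x y) = -1 := by
      unfold sgn
      rw [Equiv.Perm.sign_swap h]
      norm_num
    rw [this, map_neg, map_one]
    ring
  simp only [aInv, map_mul, map_sub, act_X, hY]
  fin_cases x <;> fin_cases y <;> first
    | exact absurd rfl h
    | (simp only [Equiv.swap_apply_def]
       norm_num [Fin.ext_iff, show ((⟨2, by norm_num⟩ : Fin 3)) = 2 from rfl,
         show ((⟨1, by norm_num⟩ : Fin 3)) = 1 from rfl, show ((⟨0, by norm_num⟩ : Fin 3)) = 0 from rfl]
       ring)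


end
end S3Aux


/-- The invariant ring `ℚ[x₁,x₂,x₃,y]^{S₃}` (S₃ permuting the `xᵢ` and acting on `y` by the
sign character) is generated as a `ℚ`-algebra by `e₁, e₂, e₃, y²` and
`a = y(x₂-x₁)(x₃-x₂)(x₃-x₁)`. -/
theorem S3_invariant_ring_generators (f : MvPolynomial ((Fin 3) ⊕ Unit) ℚ) :
    (∀ σ : Equiv.Perm (Fin 3), s3polyAct σ f = f) ↔
      f ∈ Algebra.adjoin ℚ ({e₁, e₂, e₃, ysq, aInv} :
        Set (MvPolynomial ((Fin 3) ⊕ Unit) ℚ)) := by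
  open S3Aux in
  constructor
  · intro hf
    have hcoef : ∀ (σ : Equiv.Perm (Fin 3)) (k : ℕ),
        rename (⇑σ) ((F f).coeff k) = C (sgn σ ^ k) * (F f).coeff k := by
      intro σ k
      have h1 := coeff_F_act σ f k
      rw [hf σ] at h1
      have h2 := congrArg (fun z => C (sgn σ ^ k) * z) h1
      rw [← mul_assoc, ← map_mul, ← mul_pow, sgn_mul_self, one_pow, map_one, one_mul] at h2
      exact h2.symm
    show f ∈ T
    rw [← GF f, ← Polynomial.sum_C_mul_X_pow_eq (F f), Polynomial.sum, map_sum]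
    apply Subalgebra.sum_mem
    intro k _
    rw [map_mul, map_pow, G_C, G_X]
    have hY2 : ysq ∈ T := Algebra.subset_adjoin (by simp)
    have hA : aInv ∈ T := Algebra.subset_adjoin (by simp)
    rcases Nat.even_or_odd k with ⟨m, hm⟩ | ⟨m, hm⟩
    · have hsym : ((F f).coeff k).IsSymmetric := by
        intro σ
        rw [hcoef σ k, hm,
          show sgn σ ^ (m + m) = 1 from by
            rw [← two_mul, pow_mul, pow_two, sgn_mul_self, one_pow],
          map_one, one_mul]
      refine Subalgebra.mul_mem T (sym_mem _ hsym) ?_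
      rw [hm, ← two_mul, pow_mul, show ((Y : R3) ^ 2) = ysq from rfl]
      exact Subalgebra.pow_mem T hY2 m
    · have hanti : ∀ σ : Equiv.Perm (Fin 3),
          rename (⇑σ) ((F f).coeff k) = C (sgn σ) * (F f).coeff k := by
        intro σ
        rw [hcoef σ k, hm]
        congr 2
        rw [pow_succ, pow_mul, pow_two, sgn_mul_self, one_pow, one_mul]
      obtain ⟨s, hfac, hs⟩ := anti_factor _ hanti
      rw [hfac, map_mul]
      have hιdelta : (ι delta * Y : R3) = aInv := by
        simp only [ι, delta, aInv, Y, map_mul, map_sub, rename_X]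
        ring
      have hkpow : (Y : R3) ^ k = Y * ysq ^ m := by
        rw [hm, pow_succ, pow_mul, show ((Y : R3) ^ 2) = ysq from rfl]
        ring
      rw [hkpow, show (ι delta * ι s * (Y * ysq ^ m) : R3)
          = ι s * (ι delta * Y) * ysq ^ m from by ring, hιdelta]
      exact mul_mem (mul_mem (sym_mem s hs) hA) (Subalgebra.pow_mem T hY2 m)
  · intro hf σ
    have hT : (Algebra.adjoin ℚ ({e₁, e₂, e₃, ysq, aInv} :
        Set (MvPolynomial ((Fin 3) ⊕ Unit) ℚ))) ≤
        AlgHom.equalizer (s3polyAct σ) (AlgHom.id ℚ _) := by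
      apply Algebra.adjoin_le
      intro x hx
      simp only [Set.mem_insert_iff, Set.mem_singleton_iff] at hx
      have hmem : ∀ g : MvPolynomial ((Fin 3) ⊕ Unit) ℚ, s3polyAct σ g = g →
          g ∈ AlgHom.equalizer (s3polyAct σ) (AlgHom.id ℚ _) := fun g hg => hg
      rcases hx with rfl | rfl | rfl | rfl | rfl
      · exact hmem _ (act_e₁ σ)
      · exact hmem _ (inv_of_swaps _ act_swap_e₂ σ)
      · exact hmem _ (inv_of_swaps _ act_swap_e₃ σ)
      · exact hmem _ (act_ysq σ)
      · exact hmem _ (inv_of_swaps _ act_swap_aInv σ)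
    exact hT hf
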